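/- (Supersaturation) For every k-uniform hypergraph F and every ε > 0, there exist δ > 0 and n₀ such that every k-graph on n ≥ n₀ vertices with at least (π(F) + ε)·C(n,k) edges contains at least δ·n^{v(F)} copies of F, where v(F) is the number of vertices of F. -/

import Mathlib

open Finset Set Filter
open Topology

/-- Adding the `k`-set `e` to the hypergraph with edge set `H` creates a new copy of the
hypergraph with edge set `Fe`, i.e. a copy containing `e` as an edge. -/
def CreatesCopy {ι V : Type*} (Fe : Set (Finset ι)) (H : Set (Finset V)) (e : Finset V) : Prop :=
  ∃ f : ι ↪ V, (∀ s ∈ Fe, s.map f ∈ H ∪ {e}) ∧ ∃ s ∈ Fe, s.map f = e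

/-- One step of the `F`-bootstrap percolation process for `k`-graphs. -/
def bootStep {ι V : Type*} (k : ℕ) (Fe : Set (Finset ι)) (H : Set (Finset V)) :
    Set (Finset V) :=
  H ∪ {e | e.card = k ∧ CreatesCopy Fe H e}

/-- The `F`-bootstrap percolation process starting with `H0`. -/
def procSeq {ι V : Type*} (k : ℕ) (Fe : Set (Finset ι)) (H0 : Set (Finset V)) :
    ℕ → Set (Finset V)
  | 0 => H0
  | i + 1 => bootStep k Fe (procSeq k Fe H0 i)

/-- The running time of the `F`-bootstrap percolation process starting with `H0`. -/
noncomputable def runTime {ι V : Type*} (k : ℕ) (Fe : Set (Finset ι))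
    (H0 : Set (Finset V)) : ℕ :=
  sInf {i | procSeq k Fe H0 i = procSeq k Fe H0 (i + 1)}

/-- The maximum running time over all `k`-uniform starting hypergraphs on `n` vertices. -/
noncomputable def maxRunTime {ι : Type*} (k : ℕ) (Fe : Set (Finset ι)) (n : ℕ) : ℕ :=
  sSup {t | ∃ H0 : Set (Finset (Fin n)), (∀ e ∈ H0, e.card = k) ∧ t = runTime k Fe H0}

/-- `H` contains a copy of the hypergraph with edge set `Fe`. -/
def ContainsCopy {ι V : Type*} (Fe : Set (Finset ι)) (H : Set (Finset V)) : Prop :=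
  ∃ f : ι ↪ V, ∀ s ∈ Fe, s.map f ∈ H

/-- The Turán extremal number `ex(n, F)` for `k`-graphs. -/
noncomputable def exNum {ι : Type*} (k : ℕ) (Fe : Set (Finset ι)) (n : ℕ) : ℕ :=
  sSup {m | ∃ H : Set (Finset (Fin n)),
    (∀ e ∈ H, e.card = k) ∧ ¬ ContainsCopy Fe H ∧ m = H.ncard}

/-- The Turán density `π(F)`. -/
noncomputable def turanDensity {ι : Type*} (k : ℕ) (Fe : Set (Finset ι)) : ℝ :=
  limUnder atTop (fun n : ℕ => (exNum k Fe n : ℝ) / (n.choose k : ℝ))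

/-- The copies of `F` in `H`, as subhypergraphs: pairs of a vertex set and an edge set. -/
def copies {ι V : Type*} [Fintype ι] (Fe : Set (Finset ι)) (H : Set (Finset V)) :
    Set (Finset V × Set (Finset V)) :=
  {p | ∃ f : ι ↪ V, p.1 = Finset.univ.map f ∧ p.2 = (fun s => s.map f) '' Fe ∧
    ∀ s ∈ Fe, s.map f ∈ H}

/-- The step of the process at which the edge `e` is added (`0` if `e ∈ H0`). -/
noncomputable def stepOf {ι V : Type*} (k : ℕ) (Fe : Set (Finset ι)) (H0 : Set (Finset V))
    (e : Finset V) : ℕ :=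
  sInf {s | e ∈ procSeq k Fe H0 s}

/-- `i(D)`: the largest step index whose chosen edge belongs to the edge set `Ed`. -/
noncomputable def idxMax {V : Type*} (e : ℕ → Finset V) (τ : ℕ) (Ed : Set (Finset V)) : ℕ :=
  sSup {i | i ∈ Set.Icc 1 τ ∧ e i ∈ Ed}

/-- `j(D)`: the largest step index whose chosen edge belongs to `Ed` minus `e_{i(D)}`. -/
noncomputable def idxSnd {V : Type*} (e : ℕ → Finset V) (τ : ℕ) (Ed : Set (Finset V)) : ℕ :=
  sSup {j | j ∈ Set.Icc 1 τ ∧ e j ∈ Ed \ {e (idxMax e τ Ed)}}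

/-- The type (1–4) of a copy `D` with completing edge `eD`, as in the paper. -/
def copyType {ι V : Type*} (k : ℕ) (Fe : Set (Finset ι)) (H0 : Set (Finset V))
    (e : ℕ → Finset V) (τ : ℕ) (eD : Finset V) (Ed : Set (Finset V)) (α : ℕ) : Prop :=
  (α = 1 ∧ stepOf k Fe H0 eD ≤ idxSnd e τ Ed) ∨
  (α = 2 ∧ idxSnd e τ Ed < stepOf k Fe H0 eD ∧ stepOf k Fe H0 eD < idxMax e τ Ed) ∨
  (α = 3 ∧ idxMax e τ Ed < stepOf k Fe H0 eD) ∨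
  (α = 4 ∧ stepOf k Fe H0 eD = idxMax e τ Ed)

lemma count_supersets {α : Type*} [DecidableEq α] [Fintype α] (e : Finset α) (m : ℕ)
    (h : e.card ≤ m) :
    ((Finset.powersetCard m (Finset.univ : Finset α)).filter (fun W => e ⊆ W)).card
      = (Fintype.card α - e.card).choose (m - e.card) := by
  rw [← Finset.card_compl e, ← Finset.card_powersetCard]
  apply Finset.card_bij' (fun W _ => W \ e) (fun U _ => U ∪ e)
  · intro W hW
    simp only [Finset.mem_filter, Finset.mem_powersetCard] at hW
    obtain ⟨⟨-, hcard⟩, hsub⟩ := hW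
    simp only [Finset.mem_powersetCard]
    constructor
    · intro x hx
      simp only [Finset.mem_compl]
      exact fun hxe => (Finset.mem_sdiff.1 hx).2 hxe
    · rw [Finset.card_sdiff_of_subset hsub, hcard]
  · intro U hU
    simp only [Finset.mem_powersetCard] at hU
    obtain ⟨hsub, hcard⟩ := hU
    have hdisj : Disjoint U e := by
      rw [Finset.disjoint_right]
      intro x hxe hxU
      exact (Finset.mem_compl.1 (hsub hxU)) hxe
    simp only [Finset.mem_filter, Finset.mem_powersetCard]
    refine ⟨⟨Finset.subset_univ _, ?_⟩, Finset.subset_union_right⟩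
    rw [Finset.card_union_of_disjoint hdisj, hcard]
    omega
  · intro W hW
    simp only [Finset.mem_filter] at hW
    exact Finset.sdiff_union_of_subset hW.2
  · intro U hU
    simp only [Finset.mem_powersetCard] at hU
    have hdisj : Disjoint U e := by
      rw [Finset.disjoint_right]
      intro x hxe hxU
      exact (Finset.mem_compl.1 (hU.1 hxU)) hxe
    rw [Finset.union_sdiff_distrib, Finset.sdiff_self, Finset.union_empty,
      Finset.sdiff_eq_self_of_disjoint hdisj]

lemma double_count {α : Type*} [DecidableEq α] [Fintype α] (Hf : Finset (Finset α)) (k m : ℕ)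
    (hk : ∀ e ∈ Hf, e.card = k) (hkm : k ≤ m) :
    ∑ W ∈ Finset.powersetCard m (Finset.univ : Finset α), (Hf.filter (· ⊆ W)).card
      = Hf.card * (Fintype.card α - k).choose (m - k) := by
  have h1 : ∀ W, (Hf.filter (· ⊆ W)).card = ∑ e ∈ Hf, if e ⊆ W then 1 else 0 := by
    intro W; rw [Finset.card_filter]
  simp only [h1]
  rw [Finset.sum_comm]
  have h2 : ∀ e ∈ Hf, (∑ W ∈ Finset.powersetCard m (Finset.univ : Finset α),
      if e ⊆ W then 1 else 0) = (Fintype.card α - k).choose (m - k) := by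
    intro e he
    rw [← Finset.card_filter]
    have := count_supersets e m (by rw [hk e he]; exact hkm)
    rwa [hk e he] at this
  rw [Finset.sum_congr rfl h2, Finset.sum_const, smul_eq_mul]

lemma exists_emb {n m : ℕ} (W : Finset (Fin n)) (h : W.card = m) :
    ∃ g : Fin m ↪ Fin n, Finset.univ.map g = W := by
  refine ⟨(W.orderIsoOfFin h).toEquiv.toEmbedding.trans (Function.Embedding.subtype _), ?_⟩
  apply Finset.eq_of_subset_of_card_le
  · intro x hx
    simp only [Finset.mem_map, Function.Embedding.trans_apply] at hx
    obtain ⟨i, -, rfl⟩ := hx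
    exact ((W.orderIsoOfFin h) i).2
  · rw [Finset.card_map, Finset.card_univ, Fintype.card_fin, h]

lemma uniform_ncard_le {α : Type*} [Fintype α] [DecidableEq α] (H : Set (Finset α)) (k : ℕ)
    (hH : ∀ e ∈ H, e.card = k) : H.ncard ≤ (Fintype.card α).choose k := by
  have hsub : H ⊆ ↑(Finset.powersetCard k (Finset.univ : Finset α)) := by
    intro e he
    simp only [Finset.mem_coe, Finset.mem_powersetCard]
    exact ⟨Finset.subset_univ _, hH e he⟩
  calc H.ncard ≤ (↑(Finset.powersetCard k (Finset.univ : Finset α)) : Set (Finset α)).ncard :=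
        Set.ncard_le_ncard hsub (Set.toFinite _)
    _ = (Fintype.card α).choose k := by
        rw [Set.ncard_coe_finset, Finset.card_powersetCard, Finset.card_univ]

lemma le_exNum {ι : Type*} (k : ℕ) (Fe : Set (Finset ι)) {m : ℕ} (H : Set (Finset (Fin m)))
    (hH : ∀ e ∈ H, e.card = k) (hfree : ¬ ContainsCopy Fe H) : H.ncard ≤ exNum k Fe m := by
  apply le_csSup
  · refine ⟨m.choose k, ?_⟩
    rintro x ⟨H', hH', -, rfl⟩
    have := uniform_ncard_le H' k hH'
    rwa [Fintype.card_fin] at this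
  · exact ⟨H, hH, hfree, rfl⟩

lemma exNum_le {ι : Type*} (k : ℕ) (Fe : Set (Finset ι)) {m : ℕ} {b : ℕ}
    (hb : ∀ H : Set (Finset (Fin m)), (∀ e ∈ H, e.card = k) → ¬ ContainsCopy Fe H →
      H.ncard ≤ b) : exNum k Fe m ≤ b := by
  apply csSup_le'
  rintro x ⟨H, h1, h2, rfl⟩
  exact hb H h1 h2

lemma subset_map_exists {m n : ℕ} (g : Fin m ↪ Fin n) (e : Finset (Fin n))
    (he : e ⊆ Finset.univ.map g) : ∃ s : Finset (Fin m), s.map g = e := by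
  refine ⟨Finset.univ.filter (fun i => g i ∈ e), ?_⟩
  ext x
  simp only [Finset.mem_map, Finset.mem_filter, Finset.mem_univ, true_and]
  constructor
  · rintro ⟨i, hi, rfl⟩; exact hi
  · intro hx
    obtain ⟨i, -, rfl⟩ := Finset.mem_map.1 (he hx)
    exact ⟨i, hx, rfl⟩

lemma dichotomy {ι : Type*} [Fintype ι] (k : ℕ) (Fe : Set (Finset ι)) {n m : ℕ}
    (H : Set (Finset (Fin n))) (hH : ∀ e ∈ H, e.card = k)
    (Hf : Finset (Finset (Fin n))) (hHf : ∀ e, e ∈ Hf ↔ e ∈ H)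
    (W : Finset (Fin n)) (hW : W.card = m) :
    (∃ p ∈ copies Fe H, p.1 ⊆ W) ∨ (Hf.filter (· ⊆ W)).card ≤ exNum k Fe m := by
  obtain ⟨g, hg⟩ := exists_emb W hW
  set H' : Set (Finset (Fin m)) := {s | s.map g ∈ H} with hH'def
  have hinj : Function.Injective (fun s : Finset (Fin m) => s.map g) :=
    fun s t h => Finset.map_injective g h
  have himg : (fun s : Finset (Fin m) => s.map g) '' H' = ↑(Hf.filter (· ⊆ W)) := by
    ext e
    simp only [Set.mem_image, Finset.coe_filter, Set.mem_setOf_eq, Finset.mem_coe, hHf]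
    constructor
    · rintro ⟨s, hs, rfl⟩
      exact ⟨hs, by rw [← hg]; exact Finset.map_subset_map.2 (Finset.subset_univ s)⟩
    · rintro ⟨heH, heW⟩
      obtain ⟨s, rfl⟩ := subset_map_exists g e (hg ▸ heW)
      exact ⟨s, heH, rfl⟩
  have hcard : (Hf.filter (· ⊆ W)).card = H'.ncard := by
    rw [← Set.ncard_coe_finset, ← himg, Set.ncard_image_of_injective _ hinj]
  by_cases hcc : ContainsCopy Fe H'
  · obtain ⟨f, hf⟩ := hcc
    left
    refine ⟨(Finset.univ.map (f.trans g), (fun s => s.map (f.trans g)) '' Fe),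
      ⟨f.trans g, rfl, rfl, ?_⟩, ?_⟩
    · intro s hs
      rw [← Finset.map_map]
      exact hf s hs
    · rw [← hg]
      intro x hx
      simp only [Finset.mem_map, Function.Embedding.trans_apply] at hx ⊢
      obtain ⟨i, -, rfl⟩ := hx
      exact ⟨f i, Finset.mem_univ _, rfl⟩
  · right
    rw [hcard]
    exact le_exNum k Fe H' (fun s hs => by rw [← Finset.card_map g]; exact hH _ hs) hcc

lemma copies_nonempty_iff {ι V : Type*} [Fintype ι] {Fe : Set (Finset ι)} {H : Set (Finset V)}
    {p} (hp : p ∈ copies Fe H) : ContainsCopy Fe H := by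
  obtain ⟨f, -, -, h⟩ := hp
  exact ⟨f, h⟩

lemma exNum_spec {ι : Type*} (k : ℕ) (Fe : Set (Finset ι)) (n : ℕ) :
    exNum k Fe n = 0 ∨ ∃ H : Set (Finset (Fin n)), (∀ e ∈ H, e.card = k) ∧
      ¬ ContainsCopy Fe H ∧ exNum k Fe n = H.ncard := by
  set S : Set ℕ := {m | ∃ H : Set (Finset (Fin n)),
    (∀ e ∈ H, e.card = k) ∧ ¬ ContainsCopy Fe H ∧ m = H.ncard} with hS
  rcases S.eq_empty_or_nonempty with h | h
  · left
    rw [exNum, ← hS, h, csSup_empty]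
    rfl
  · right
    have hbdd : BddAbove S := by
      refine ⟨n.choose k, ?_⟩
      rintro x ⟨H', hH', -, rfl⟩
      have := uniform_ncard_le H' k hH'
      rwa [Fintype.card_fin] at this
    have hmem : sSup S ∈ S := Nat.sSup_mem h hbdd
    obtain ⟨H, h1, h2, h3⟩ := hmem
    exact ⟨H, h1, h2, h3⟩

lemma exNum_mul_le {ι : Type*} [Fintype ι] (k : ℕ) (Fe : Set (Finset ι)) {m n : ℕ}
    (hkm : k ≤ m) (hmn : m ≤ n) :
    exNum k Fe n * (n - k).choose (m - k) ≤ n.choose m * exNum k Fe m := by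
  rcases exNum_spec k Fe n with h0 | ⟨H, hH, hfree, hex⟩
  · simp [h0]
  classical
  set Hf : Finset (Finset (Fin n)) := (Set.toFinite H).toFinset with hHfdef
  have hHf : ∀ e, e ∈ Hf ↔ e ∈ H := fun e => Set.Finite.mem_toFinset _
  have hcard : Hf.card = H.ncard := (Set.ncard_eq_toFinset_card H (Set.toFinite H)).symm
  rw [hex, ← hcard]
  have hdc := double_count Hf k m (fun e he => hH e ((hHf e).1 he)) hkm
  rw [Fintype.card_fin] at hdc
  rw [← hdc]
  have hle : ∀ W ∈ Finset.powersetCard m (Finset.univ : Finset (Fin n)),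
      (Hf.filter (· ⊆ W)).card ≤ exNum k Fe m := by
    intro W hW
    have hWcard : W.card = m := (Finset.mem_powersetCard.1 hW).2
    rcases dichotomy k Fe H hH Hf hHf W hWcard with ⟨p, hp, -⟩ | hle
    · exact absurd (copies_nonempty_iff hp) hfree
    · exact hle
  calc ∑ W ∈ Finset.powersetCard m (Finset.univ : Finset (Fin n)), (Hf.filter (· ⊆ W)).card
      ≤ ∑ _W ∈ Finset.powersetCard m (Finset.univ : Finset (Fin n)), exNum k Fe m :=
        Finset.sum_le_sum hle
    _ = n.choose m * exNum k Fe m := by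
        rw [Finset.sum_const, smul_eq_mul, Finset.card_powersetCard, Finset.card_univ,
          Fintype.card_fin]

lemma pow_le_choose' (n v : ℕ) (h : 2*v ≤ n) :
    n^v ≤ 2^v * (v.factorial * n.choose v) := by
  calc n^v ≤ (2*(n+1-v))^v := Nat.pow_le_pow_left (by omega) v
    _ = 2^v * (n+1-v)^v := by rw [mul_pow]
    _ ≤ 2^v * n.descFactorial v :=
        Nat.mul_le_mul_left _ (Nat.pow_sub_le_descFactorial n v)
    _ = 2^v * (v.factorial * n.choose v) := by
        rw [Nat.descFactorial_eq_factorial_mul_choose]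

lemma a_mono {ι : Type*} [Fintype ι] (k : ℕ) (Fe : Set (Finset ι)) {m n : ℕ}
    (hkm : k ≤ m) (hmn : m ≤ n) :
    (exNum k Fe n : ℝ) / (n.choose k : ℝ) ≤ (exNum k Fe m : ℝ) / (m.choose k : ℝ) := by
  have hnk : (0:ℝ) < n.choose k := by exact_mod_cast Nat.choose_pos (hkm.trans hmn)
  have hmk : (0:ℝ) < m.choose k := by exact_mod_cast Nat.choose_pos hkm
  rw [div_le_div_iff₀ hnk hmk]
  have hnat : exNum k Fe n * m.choose k * n.choose m
      ≤ exNum k Fe m * n.choose k * n.choose m := by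
    have h1 := exNum_mul_le k Fe hkm hmn
    have hid : n.choose m * m.choose k = n.choose k * (n - k).choose (m - k) :=
      Nat.choose_mul (n := n) hkm
    calc exNum k Fe n * m.choose k * n.choose m
        = exNum k Fe n * (n.choose m * m.choose k) := by ring
      _ = exNum k Fe n * (n-k).choose (m-k) * n.choose k := by rw [hid]; ring
      _ ≤ n.choose m * exNum k Fe m * n.choose k := Nat.mul_le_mul_right _ h1
      _ = exNum k Fe m * n.choose k * n.choose m := by ring
  have hnm : 0 < n.choose m := Nat.choose_pos hmn
  have := Nat.le_of_mul_le_mul_right hnat hnm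
  exact_mod_cast this

lemma turan_tendsto {ι : Type*} [Fintype ι] (k : ℕ) (Fe : Set (Finset ι)) :
    Tendsto (fun n : ℕ => (exNum k Fe n : ℝ) / (n.choose k : ℝ)) atTop
      (𝓝 (turanDensity k Fe)) := by
  set a := fun n : ℕ => (exNum k Fe n : ℝ) / (n.choose k : ℝ) with ha
  have hant : Antitone (fun i => a (i + k)) := by
    intro i j hij
    exact a_mono k Fe (Nat.le_add_left k i) (by omega)
  have hbdd : BddBelow (Set.range (fun i => a (i + k))) := by
    refine ⟨0, ?_⟩
    rintro x ⟨i, rfl⟩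
    simp only [ha]
    positivity
  have h1 : Tendsto (fun i => a (i + k)) atTop (𝓝 (⨅ i, a (i + k))) :=
    tendsto_atTop_ciInf hant hbdd
  have h2 : Tendsto a atTop (𝓝 (⨅ i, a (i + k))) := (tendsto_add_atTop_iff_nat k).1 h1
  have h3 : turanDensity k Fe = ⨅ i, a (i + k) := by
    rw [turanDensity, ← ha]
    exact h2.limUnder_eq
  rw [h3]
  exact h2
/-- Supersaturation: for every `k`-graph `F` and every `ε > 0` there are `δ > 0` and `n₀`
such that every `k`-graph on `n ≥ n₀` vertices with at least `(π(F) + ε) · C(n,k)` edges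
contains at least `δ · n ^ v(F)` copies of `F`. -/
theorem supersaturation (k : ℕ) {ι : Type*} [Fintype ι] (Fe : Set (Finset ι))
    (hFe : ∀ s ∈ Fe, s.card = k) (ε : ℝ) (hε : 0 < ε) :
    ∃ δ : ℝ, 0 < δ ∧ ∃ n₀ : ℕ, ∀ n : ℕ, n₀ ≤ n →
      ∀ H : Set (Finset (Fin n)), (∀ e ∈ H, e.card = k) →
        (turanDensity k Fe + ε) * (n.choose k : ℝ) ≤ (H.ncard : ℝ) →
          δ * (n : ℝ) ^ (Fintype.card ι) ≤ ((copies Fe H).ncard : ℝ) := by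
  classical
  set v := Fintype.card ι with hv
  set L := turanDensity k Fe with hLdef
  have hta := turan_tendsto k Fe
  have hev : ∀ᶠ n in atTop, (exNum k Fe n : ℝ) / (n.choose k : ℝ) < L + ε/2 :=
    hta.eventually_lt_const (by linarith)
  obtain ⟨N, hN⟩ := eventually_atTop.1 hev
  set m := N + k + v with hmdef
  have hkm : k ≤ m := by omega
  have hvm : v ≤ m := by omega
  have ham : (exNum k Fe m : ℝ) / (m.choose k : ℝ) < L + ε/2 := hN m (by omega)
  have hmk0 : (0:ℝ) < m.choose k := by exact_mod_cast Nat.choose_pos hkm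
  have hexm : (exNum k Fe m : ℝ) ≤ (L + ε/2) * m.choose k :=
    ((div_lt_iff₀ hmk0).1 ham).le
  have hAv : (0:ℝ) < (m.choose v : ℝ) := by exact_mod_cast Nat.choose_pos hvm
  have hfv : (0:ℝ) < (v.factorial : ℝ) := by exact_mod_cast v.factorial_pos
  set δ : ℝ := ε / (2 * (m.choose v : ℝ) * ((v.factorial : ℝ) * 2^v)) with hδdef
  have hδpos : 0 < δ := by
    apply div_pos hε
    positivity
  refine ⟨δ, hδpos, m + 2*v, ?_⟩
  intro n hn H hH hdens
  have hmn : m ≤ n := by omega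
  have h2v : 2*v ≤ n := by omega
  have hkn : k ≤ n := hkm.trans hmn
  have hvn : v ≤ n := hvm.trans hmn
  set Hf : Finset (Finset (Fin n)) := (Set.toFinite H).toFinset with hHfdef
  have hHf : ∀ e, e ∈ Hf ↔ e ∈ H := fun e => Set.Finite.mem_toFinset _
  have hHfH : Hf.card = H.ncard := (Set.ncard_eq_toFinset_card H (Set.toFinite H)).symm
  set P := Finset.powersetCard m (Finset.univ : Finset (Fin n)) with hPdef
  set G := P.filter (fun W => exNum k Fe m < (Hf.filter (· ⊆ W)).card) with hGdef
  have hdc := double_count Hf k m (fun e he => hH e ((hHf e).1 he)) hkm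
  rw [Fintype.card_fin] at hdc
  have hWbound : ∀ W ∈ P, (Hf.filter (· ⊆ W)).card
      ≤ exNum k Fe m + (if W ∈ G then m.choose k else 0) := by
    intro W hW
    by_cases hWG : W ∈ G
    · simp only [hWG, if_true]
      have hWm : W.card = m := (Finset.mem_powersetCard.1 hW).2
      have hle : (Hf.filter (· ⊆ W)).card ≤ m.choose k := by
        have hsub : Hf.filter (· ⊆ W) ⊆ Finset.powersetCard k W := by
          intro e he
          rw [Finset.mem_filter] at he
          rw [Finset.mem_powersetCard]
          exact ⟨he.2, hH e ((hHf e).1 he.1)⟩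
        calc (Hf.filter (· ⊆ W)).card ≤ (Finset.powersetCard k W).card :=
              Finset.card_le_card hsub
          _ = m.choose k := by rw [Finset.card_powersetCard, hWm]
      omega
    · simp only [hWG, if_false]
      have : ¬ exNum k Fe m < (Hf.filter (· ⊆ W)).card :=
        fun h => hWG (Finset.mem_filter.2 ⟨hW, h⟩)
      omega
  have hsum_le : Hf.card * (n-k).choose (m-k)
      ≤ n.choose m * exNum k Fe m + G.card * m.choose k := by
    rw [← hdc]
    calc ∑ W ∈ P, (Hf.filter (· ⊆ W)).card
        ≤ ∑ W ∈ P, (exNum k Fe m + if W ∈ G then m.choose k else 0) :=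
          Finset.sum_le_sum hWbound
      _ = P.card * exNum k Fe m + ∑ W ∈ P, (if W ∈ G then m.choose k else 0) := by
          rw [Finset.sum_add_distrib, Finset.sum_const, smul_eq_mul]
      _ = n.choose m * exNum k Fe m + G.card * m.choose k := by
          congr 1
          · rw [hPdef, Finset.card_powersetCard, Finset.card_univ, Fintype.card_fin]
          · rw [← Finset.sum_filter, Finset.filter_mem_eq_inter,
              Finset.inter_eq_right.2 (Finset.filter_subset _ _), Finset.sum_const, smul_eq_mul]
  have hGcard : (ε/2) * (n.choose m : ℝ) ≤ (G.card : ℝ) := by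
    have hcast : (Hf.card : ℝ) * ((n-k).choose (m-k) : ℝ)
        ≤ (n.choose m : ℝ) * (exNum k Fe m : ℝ) + (G.card : ℝ) * (m.choose k : ℝ) := by
      exact_mod_cast hsum_le
    have hdens' : (L + ε) * (n.choose k : ℝ) ≤ (Hf.card : ℝ) := by rw [hHfH]; exact hdens
    have hid : (n.choose m : ℝ) * (m.choose k : ℝ)
        = (n.choose k : ℝ) * ((n-k).choose (m-k) : ℝ) := by
      exact_mod_cast Nat.choose_mul (n := n) hkm
    have hCnonneg : (0:ℝ) ≤ ((n-k).choose (m-k) : ℝ) := Nat.cast_nonneg _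
    have h5 : (L + ε) * ((n.choose m : ℝ) * (m.choose k : ℝ))
        ≤ (n.choose m : ℝ) * (exNum k Fe m : ℝ) + (G.card : ℝ) * (m.choose k : ℝ) := by
      rw [hid]
      calc (L+ε) * ((n.choose k:ℝ) * ((n-k).choose (m-k) : ℝ))
          = ((L+ε) * (n.choose k:ℝ)) * ((n-k).choose (m-k) : ℝ) := by ring
        _ ≤ (Hf.card : ℝ) * ((n-k).choose (m-k) : ℝ) :=
            mul_le_mul_of_nonneg_right hdens' hCnonneg
        _ ≤ _ := hcast
    have h6 : (n.choose m : ℝ) * (exNum k Fe m : ℝ)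
        ≤ (n.choose m : ℝ) * ((L+ε/2) * (m.choose k : ℝ)) :=
      mul_le_mul_of_nonneg_left hexm (Nat.cast_nonneg _)
    have h7 : (ε/2) * (n.choose m:ℝ) * (m.choose k : ℝ)
        ≤ (G.card:ℝ) * (m.choose k : ℝ) := by nlinarith [h5, h6]
    exact le_of_mul_le_mul_right (by linarith) hmk0
  set CP := copies Fe H with hCPdef
  set Cf : Finset (Finset (Fin n) × Set (Finset (Fin n))) := (Set.toFinite CP).toFinset with hCfdef
  have hCfmem : ∀ p, p ∈ Cf ↔ p ∈ CP := fun p => Set.Finite.mem_toFinset _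
  have hCfcard : Cf.card = CP.ncard := (Set.ncard_eq_toFinset_card CP (Set.toFinite CP)).symm
  have hGsub : G ⊆ Cf.biUnion (fun p => P.filter (fun W => p.1 ⊆ W)) := by
    intro W hWG
    rw [hGdef, Finset.mem_filter] at hWG
    obtain ⟨hWP, hWlt⟩ := hWG
    have hWm : W.card = m := (Finset.mem_powersetCard.1 hWP).2
    rcases dichotomy k Fe H hH Hf hHf W hWm with ⟨p, hp, hpsub⟩ | hle
    · exact Finset.mem_biUnion.2 ⟨p, (hCfmem p).2 hp, Finset.mem_filter.2 ⟨hWP, hpsub⟩⟩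
    · omega
  have hGle : G.card ≤ Cf.card * (n - v).choose (m - v) := by
    calc G.card ≤ (Cf.biUnion (fun p => P.filter (fun W => p.1 ⊆ W))).card :=
          Finset.card_le_card hGsub
      _ ≤ ∑ p ∈ Cf, (P.filter (fun W => p.1 ⊆ W)).card := Finset.card_biUnion_le
      _ ≤ ∑ _p ∈ Cf, (n - v).choose (m - v) := Finset.sum_le_sum (fun p hp => ?_)
      _ = Cf.card * (n - v).choose (m - v) := by rw [Finset.sum_const, smul_eq_mul]
    obtain ⟨f, hp1, -, -⟩ := (hCfmem p).1 hp
    have hcardp : p.1.card = v := by rw [hp1, Finset.card_map, Finset.card_univ]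
    have hcs := count_supersets p.1 m (by rw [hcardp]; exact hvm)
    rw [hcardp, Fintype.card_fin] at hcs
    rw [hPdef]
    exact le_of_eq hcs
  -- final arithmetic
  have hBv : (0:ℝ) < ((n-v).choose (m-v) : ℝ) := by
    exact_mod_cast Nat.choose_pos (by omega : m - v ≤ n - v)
  have hidv : (n.choose m : ℝ) * (m.choose v:ℝ)
      = (n.choose v:ℝ) * ((n-v).choose (m-v):ℝ) := by
    exact_mod_cast Nat.choose_mul (n := n) hvm
  have hpow : ((n:ℝ))^v ≤ 2^v * ((v.factorial : ℝ) * (n.choose v : ℝ)) := by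
    exact_mod_cast pow_le_choose' n v h2v
  have hGle' : (G.card : ℝ) ≤ (Cf.card:ℝ) * ((n-v).choose (m-v):ℝ) := by exact_mod_cast hGle
  rw [← hCfcard]
  refine le_of_mul_le_mul_right ?_ (mul_pos hAv hBv)
  have hδeq : δ * (2^v * (v.factorial:ℝ)) * (m.choose v : ℝ) = ε/2 := by
    rw [hδdef]
    field_simp
  calc δ * (n:ℝ)^v * ((m.choose v : ℝ) * ((n-v).choose (m-v):ℝ))
      ≤ δ * (2^v * ((v.factorial : ℝ) * (n.choose v : ℝ)))
          * ((m.choose v : ℝ) * ((n-v).choose (m-v):ℝ)) := by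
        apply mul_le_mul_of_nonneg_right (mul_le_mul_of_nonneg_left hpow hδpos.le)
        positivity
    _ = (δ * (2^v * (v.factorial:ℝ)) * (m.choose v : ℝ))
          * ((n.choose v : ℝ) * ((n-v).choose (m-v):ℝ)) := by ring
    _ = (ε/2) * ((n.choose v : ℝ) * ((n-v).choose (m-v):ℝ)) := by rw [hδeq]
    _ = (ε/2) * ((n.choose m : ℝ) * (m.choose v:ℝ)) := by rw [hidv]
    _ = ((ε/2) * (n.choose m : ℝ)) * (m.choose v:ℝ) := by ring
    _ ≤ (G.card : ℝ) * (m.choose v:ℝ) := mul_le_mul_of_nonneg_right hGcard hAv.le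
    _ ≤ ((Cf.card:ℝ) * ((n-v).choose (m-v):ℝ)) * (m.choose v:ℝ) :=
        mul_le_mul_of_nonneg_right hGle' hAv.le
    _ = (Cf.card:ℝ) * ((m.choose v : ℝ) * ((n-v).choose (m-v):ℝ)) := by ring
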